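/- For every (x, y) ∈ X and every k ∈ {0, 1, …, n}, the partial strengthened polymatroid inequality holds: √(σ + ∑_{i∈T} d_i y_i²) + ∑_{i=1}^{k} ρ_i x_i ≤ √(σ + ∑_{i=1}^{k} c_i x_i + ∑_{i∈T} d_i y_i²). -/

import Mathlib

lemma sqrt_diff_anti (c a b : ℝ) (hc : 0 ≤ c) (ha : 0 ≤ a) (hab : a ≤ b) :
    Real.sqrt (c + b) - Real.sqrt b ≤ Real.sqrt (c + a) - Real.sqrt a := by
  nlinarith [Real.sq_sqrt (by linarith : (0:ℝ) ≤ c+b), Real.sq_sqrt (by linarith : (0:ℝ) ≤ c+a),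
    Real.sq_sqrt (by linarith : (0:ℝ) ≤ b), Real.sq_sqrt ha,
    Real.sqrt_nonneg (c+b), Real.sqrt_nonneg a, Real.sqrt_nonneg (c+a), Real.sqrt_nonneg b,
    Real.sqrt_le_sqrt (by linarith : a ≤ b), Real.sqrt_le_sqrt (by linarith : c+a ≤ c+b),
    Real.sqrt_le_sqrt (by linarith : a ≤ c+a), Real.sqrt_le_sqrt (by linarith : b ≤ c+b)]

/-- For every (x, y) ∈ X and every k ∈ {0, 1, …, n}, the partial
strengthened polymatroid inequality holds:
√(σ + ∑_{i∈T} dᵢ yᵢ²) + ∑_{i=1}^{k} ρᵢ xᵢ ≤ √(σ + ∑_{i=1}^{k} cᵢ xᵢ + ∑_{i∈T} dᵢ yᵢ²). -/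
theorem partial_strengthened_polymatroid
    (n m : ℕ) (σ : ℝ) (hσ : 0 ≤ σ) (c : Fin n → ℝ) (hc : ∀ i, 0 ≤ c i)
    (d : Fin m → ℝ) (hd : ∀ i, 0 ≤ d i) (T : Finset (Fin m))
    (X : Set ((Fin n → ℝ) × (Fin m → ℝ)))
    (hX : ∀ p ∈ X, (∀ i, p.1 i = 0 ∨ p.1 i = 1) ∧ (∀ i, 0 ≤ p.2 i))
    (ρ : Fin n → ℝ)
    (hρ : ∀ k : Fin n, ρ k = 0 ∨ ∃ B : ℝ, 0 ≤ B ∧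
      ρ k = Real.sqrt (c k + B) - Real.sqrt B ∧
      ∀ p ∈ X, p.1 k = 1 →
        σ + ∑ i ∈ Finset.Iio k, c i * p.1 i + ∑ i ∈ T, d i * p.2 i ^ 2 ≤ B)
    (x : Fin n → ℝ) (y : Fin m → ℝ) (hxy : (x, y) ∈ X)
    (k : ℕ) (hk : k ≤ n) :
    Real.sqrt (σ + ∑ i ∈ T, d i * y i ^ 2) +
        ∑ i ∈ Finset.univ.filter (fun i : Fin n => (i : ℕ) < k), ρ i * x i ≤
      Real.sqrt (σ + ∑ i ∈ Finset.univ.filter (fun i : Fin n => (i : ℕ) < k), c i * x i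
        + ∑ i ∈ T, d i * y i ^ 2) := by
  have hD : 0 ≤ ∑ i ∈ T, d i * y i ^ 2 :=
    Finset.sum_nonneg fun i _ => mul_nonneg (hd i) (sq_nonneg _)
  have hx01 : ∀ i, x i = 0 ∨ x i = 1 := (hX _ hxy).1
  have hcx : ∀ i : Fin n, 0 ≤ c i * x i := by
    intro i
    rcases hx01 i with h | h <;> simp [h, hc i]
  set D := ∑ i ∈ T, d i * y i ^ 2 with hDdef
  induction k with
  | zero => simp
  | succ k ih =>
    have hkn : k < n := hk
    have ih' := ih (Nat.le_of_lt hkn)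
    set j : Fin n := ⟨k, hkn⟩ with hj
    have hsplit : Finset.univ.filter (fun i : Fin n => (i : ℕ) < k + 1) =
        insert j (Finset.univ.filter (fun i : Fin n => (i : ℕ) < k)) := by
      ext i
      simp [Fin.ext_iff, Nat.lt_succ_iff_lt_or_eq, hj, or_comm]
      omega
    have hjnot : j ∉ Finset.univ.filter (fun i : Fin n => (i : ℕ) < k) := by simp [hj]
    rw [hsplit, Finset.sum_insert hjnot, Finset.sum_insert hjnot]
    have hA : 0 ≤ ∑ i ∈ Finset.univ.filter (fun i : Fin n => (i : ℕ) < k), c i * x i :=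
      Finset.sum_nonneg fun i _ => hcx i
    set A := ∑ i ∈ Finset.univ.filter (fun i : Fin n => (i : ℕ) < k), c i * x i with hAdef
    rcases hx01 j with h0 | h1
    · have : Real.sqrt (σ + (c j * x j + A) + D) = Real.sqrt (σ + A + D) := by
        rw [h0]; ring_nf
      rw [this, h0]
      simpa using ih'
    · -- x j = 1
      have hIio : Finset.Iio j = Finset.univ.filter (fun i : Fin n => (i : ℕ) < k) := by
        ext i
        simp [Finset.mem_Iio, Fin.lt_def, hj]
      have hstep : ρ j ≤ Real.sqrt (σ + A + D + c j) - Real.sqrt (σ + A + D) := by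
        rcases hρ j with hr0 | ⟨B, hB, hreq, hbound⟩
        · rw [hr0]
          have := Real.sqrt_le_sqrt (by linarith [hc j] : σ + A + D ≤ σ + A + D + c j)
          linarith
        · have hAB : σ + A + D ≤ B := by
            have := hbound (x, y) hxy h1
            rw [hIio] at this
            simpa [hAdef, hDdef] using this
          have hkey := sqrt_diff_anti (c j) (σ + A + D) B (hc j) (by linarith) hAB
          have he : c j + (σ + A + D) = σ + A + D + c j := by ring
          rw [he] at hkey
          rw [hreq]
          linarith
      rw [h1]
      have heq : σ + (c j * 1 + A) + D = σ + A + D + c j := by ring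
      rw [heq, mul_one]
      linarith [ih']
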